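/- Let D be a probability distribution on a measurable space X, let k ≥ 1 be an integer, and on some probability space let x_1,…,x_k be i.i.d. random variables each with law D. Let e be any event (possibly correlated with (x_1,…,x_k)) with Pr[e] = δ for some δ ∈ (0,1]. Let D_e be the probability measure on X defined by D_e(A) := E[(1/k)·Σ_{i=1}^k 1{x_i ∈ A} | e] for measurable A (the law of a uniformly random element among x_1,…,x_k, conditioned on e). Then d_TV(D, D_e) ≤ √(ln(1/δ)/(2k)). -/

import Mathlib

open MeasureTheory
open scoped ENNReal


/-- Hoeffding's lemma for a Bernoulli(p): `ln(q + p e^c) ≤ c p + c²/8`. -/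
lemma bernoulli_log_mgf (p q c : ℝ) (hp : 0 ≤ p) (hq : 0 ≤ q) (hpq : p + q = 1) :
    Real.log (q + p * Real.exp c) ≤ c * p + c ^ 2 / 8 := by
  have hpos : ∀ t : ℝ, 0 < q + p * Real.exp t := by
    intro t
    rcases eq_or_lt_of_le hp with h | h
    · have : q = 1 := by linarith
      nlinarith [Real.exp_pos t]
    · nlinarith [Real.exp_pos t]
  -- G is the derivative of F c := c*p + c^2/8 - log (q + p * exp c)
  set G : ℝ → ℝ := fun t => p + t / 4 - p * Real.exp t / (q + p * Real.exp t) with hG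
  have hden : ∀ t : ℝ, HasDerivAt (fun t => q + p * Real.exp t) (p * Real.exp t) t := by
    intro t
    simpa using ((Real.hasDerivAt_exp t).const_mul p).const_add q
  have hGd : ∀ t : ℝ, HasDerivAt G
      (1 / 4 - p * Real.exp t * q / (q + p * Real.exp t) ^ 2) t := by
    intro t
    have h1 : HasDerivAt (fun t => p * Real.exp t / (q + p * Real.exp t))
        ((p * Real.exp t * (q + p * Real.exp t) - p * Real.exp t * (p * Real.exp t)) /
          (q + p * Real.exp t) ^ 2) t :=
      ((Real.hasDerivAt_exp t).const_mul p).div (hden t) (ne_of_gt (hpos t))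
    have h2 : HasDerivAt (fun t : ℝ => p + t / 4) (1 / 4) t := by
      simpa using ((hasDerivAt_id t).div_const 4).const_add p
    have := h2.fun_sub h1
    refine this.congr_deriv ?_
    field_simp
    ring
  have hGderiv : ∀ t : ℝ, deriv G t = 1 / 4 - p * Real.exp t * q / (q + p * Real.exp t) ^ 2 :=
    fun t => (hGd t).deriv
  have hG'nonneg : ∀ t : ℝ, 0 ≤ deriv G t := by
    intro t
    rw [hGderiv t]
    have hd := hpos t
    have key : p * Real.exp t * q / (q + p * Real.exp t) ^ 2 ≤ 1 / 4 := by
      rw [div_le_iff₀ (by positivity)]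
      nlinarith [sq_nonneg (q - p * Real.exp t)]
    linarith
  have hGmono : Monotone G := monotone_of_deriv_nonneg (fun t => (hGd t).differentiableAt) hG'nonneg
  have hqp : q + p = 1 := by linarith
  have hG0 : G 0 = 0 := by
    simp only [hG, Real.exp_zero, mul_one, hqp, div_one]
    ring
  -- F and its derivative
  set F : ℝ → ℝ := fun t => t * p + t ^ 2 / 8 - Real.log (q + p * Real.exp t) with hF
  have hFd : ∀ t : ℝ, HasDerivAt F (G t) t := by
    intro t
    have h1 : HasDerivAt (fun t : ℝ => t * p + t ^ 2 / 8) (p + 2 * t / 8) t := by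
      simpa using ((hasDerivAt_id' t).mul_const p).fun_add ((hasDerivAt_pow 2 t).div_const 8)
    have h2 : HasDerivAt (fun t => Real.log (q + p * Real.exp t))
        (p * Real.exp t / (q + p * Real.exp t)) t := (hden t).log (ne_of_gt (hpos t))
    have := h1.fun_sub h2
    refine this.congr_deriv ?_
    simp only [hG]
    ring
  have hF0 : F 0 = 0 := by
    simp [hF, hqp]
  have hFc : 0 ≤ F c := by
    rcases le_or_gt 0 c with h | h
    · have : MonotoneOn F (Set.Ici 0) := by
        apply monotoneOn_of_deriv_nonneg (convex_Ici 0)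
          (fun t _ => (hFd t).differentiableAt.continuousAt.continuousWithinAt)
          (fun t _ => (hFd t).differentiableAt.differentiableWithinAt)
        intro t ht
        rw [(hFd t).deriv]
        have : (0:ℝ) ≤ t := le_of_lt (by simpa using ht)
        calc (0:ℝ) = G 0 := hG0.symm
          _ ≤ G t := hGmono this
      have := this (Set.self_mem_Ici) (Set.mem_Ici.2 h) h
      linarith [hF0 ▸ this]
    · have : AntitoneOn F (Set.Iic 0) := by
        apply antitoneOn_of_deriv_nonpos (convex_Iic 0)
          (fun t _ => (hFd t).differentiableAt.continuousAt.continuousWithinAt)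
          (fun t _ => (hFd t).differentiableAt.differentiableWithinAt)
        intro t ht
        rw [(hFd t).deriv]
        have : t ≤ (0:ℝ) := le_of_lt (by simpa using ht)
        calc G t ≤ G 0 := hGmono this
          _ = 0 := hG0
      have := this (Set.mem_Iic.2 h.le) (Set.self_mem_Iic) h.le
      linarith [hF0 ▸ this]
  have : Real.log (q + p * Real.exp c) ≤ c * p + c ^ 2 / 8 := by
    simp only [hF] at hFc
    linarith
  exact this

/-- Hoeffding mgf bound for a Bernoulli random variable. -/
lemma bernoulli_mgf (p c : ℝ) (hp0 : 0 ≤ p) (hp1 : p ≤ 1) :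
    p * Real.exp (c * (1 - p)) + (1 - p) * Real.exp (-(c * p)) ≤ Real.exp (c ^ 2 / 8) := by
  set q : ℝ := 1 - p with hq
  have h := bernoulli_log_mgf p q c hp0 (by linarith) (by ring)
  have hpos : 0 < q + p * Real.exp c := by
    rcases eq_or_lt_of_le hp0 with h' | h'
    · nlinarith [Real.exp_pos c]
    · nlinarith [Real.exp_pos c]
  have h2 : q + p * Real.exp c ≤ Real.exp (c * p + c ^ 2 / 8) := by
    have := Real.exp_log hpos ▸ Real.exp_le_exp.2 h
    calc q + p * Real.exp c = Real.exp (Real.log (q + p * Real.exp c)) := (Real.exp_log hpos).symm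
      _ ≤ Real.exp (c * p + c ^ 2 / 8) := Real.exp_le_exp.2 h
  have key : (q + p * Real.exp c) * Real.exp (-(c * p)) ≤ Real.exp (c ^ 2 / 8) := by
    calc (q + p * Real.exp c) * Real.exp (-(c * p))
        ≤ Real.exp (c * p + c ^ 2 / 8) * Real.exp (-(c * p)) := by
          exact mul_le_mul_of_nonneg_right h2 (Real.exp_pos _).le
      _ = Real.exp (c ^ 2 / 8) := by rw [← Real.exp_add]; ring_nf
  calc p * Real.exp (c * (1 - p)) + (1 - p) * Real.exp (-(c * p))
      = (q + p * Real.exp c) * Real.exp (-(c * p)) := by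
        rw [add_mul, mul_assoc, ← Real.exp_add]
        ring_nf
        rw [hq]; ring
    _ ≤ Real.exp (c ^ 2 / 8) := key


lemma indicator_integral_eq {Y : Type*} [MeasurableSpace Y] (D : Measure Y)
    [IsProbabilityMeasure D] (A : Set Y) (hA : MeasurableSet A) (c : ℝ) :
    ∫ y, Real.exp (c * (A.indicator (1 : Y → ℝ) y - (D A).toReal)) ∂D
      = (D A).toReal * Real.exp (c * (1 - (D A).toReal))
        + (1 - (D A).toReal) * Real.exp (-(c * (D A).toReal)) := by
  set p : ℝ := (D A).toReal with hp
  have hfun : (fun y => Real.exp (c * (A.indicator (1 : Y → ℝ) y - p)))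
      = fun y => A.indicator (fun _ => Real.exp (c * (1 - p))) y
          + Aᶜ.indicator (fun _ => Real.exp (-(c * p))) y := by
    funext y
    by_cases hy : y ∈ A
    · simp [Set.indicator_of_mem hy, Set.indicator_of_notMem (by simpa using hy : y ∉ Aᶜ)]
    · simp [Set.indicator_of_notMem hy, Set.indicator_of_mem (by simpa using hy : y ∈ Aᶜ)]
  rw [hfun]
  have h1 : Integrable (fun y => A.indicator (fun _ => Real.exp (c * (1 - p))) y) D :=
    (integrable_const _).indicator hA
  have h2 : Integrable (fun y => Aᶜ.indicator (fun _ => Real.exp (-(c * p))) y) D :=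
    (integrable_const _).indicator hA.compl
  rw [integral_add h1 h2, integral_indicator_const _ hA, integral_indicator_const _ hA.compl]
  have hcompl : (D Aᶜ).toReal = 1 - p := by
    rw [prob_compl_eq_one_sub hA, ENNReal.toReal_sub_of_le prob_le_one ENNReal.one_ne_top]
    simp [hp]
  simp only [Measure.real]; rw [hcompl, ← hp]
  simp [smul_eq_mul]

lemma mgf_bound
    {Ω : Type*} [MeasurableSpace Ω] (P : Measure Ω) [IsProbabilityMeasure P]
    {Y : Type*} [MeasurableSpace Y] (D : Measure Y) [IsProbabilityMeasure D]
    (k : ℕ) (hk : 1 ≤ k)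
    (x : Fin k → Ω → Y) (hx : ∀ i, Measurable (x i))
    (hiid : P.map (fun ω i => x i ω) = Measure.pi fun _ : Fin k => D)
    (A : Set Y) (hA : MeasurableSet A) (lam : ℝ) :
    ∫ ω, Real.exp (lam * ((∑ i, A.indicator (1 : Y → ℝ) (x i ω)) / k - (D A).toReal)) ∂P
      ≤ Real.exp (lam ^ 2 / (8 * k)) := by
  set p : ℝ := (D A).toReal with hp
  set c : ℝ := lam / k with hc
  have hk0 : (0:ℝ) < k := by exact_mod_cast hk
  set g : Y → ℝ := fun y => Real.exp (c * (A.indicator (1 : Y → ℝ) y - p)) with hg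
  have hgm : Measurable g := by
    apply Real.measurable_exp.comp
    exact (((measurable_const.indicator hA : Measurable (A.indicator (1 : Y → ℝ))).sub
      measurable_const).const_mul c)
  -- rewrite the integrand as a product
  have hsplit : ∀ ω, Real.exp (lam * ((∑ i, A.indicator (1 : Y → ℝ) (x i ω)) / k - p))
      = ∏ i, g (x i ω) := by
    intro ω
    rw [hg]
    simp only
    rw [← Real.exp_sum]
    congr 1
    have : ∑ i : Fin k, c * (A.indicator (1 : Y → ℝ) (x i ω) - p)
        = c * ((∑ i : Fin k, A.indicator (1 : Y → ℝ) (x i ω)) - k * p) := by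
      simp only [mul_sub]
      rw [Finset.sum_sub_distrib, ← Finset.mul_sum]
      simp [Finset.sum_const, Finset.card_univ]
      ring
    rw [this, hc]
    field_simp
  simp_rw [hsplit]
  -- change of variables
  have hvec : Measurable (fun ω i => x i ω) := measurable_pi_lambda _ hx
  have hmap : ∫ ω, ∏ i, g (x i ω) ∂P = ∫ v : Fin k → Y, ∏ i, g (v i) ∂(Measure.pi fun _ => D) := by
    rw [← hiid]
    rw [integral_map hvec.aemeasurable]
    exact (Finset.measurable_prod Finset.univ
      (fun i _ => hgm.comp (measurable_pi_apply i))).aestronglyMeasurable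
  rw [hmap]
  letI : MeasureSpace Y := ⟨D⟩
  have hpi : (Measure.pi fun _ : Fin k => D) = (volume : Measure (Fin k → Y)) := rfl
  rw [hpi]
  rw [MeasureTheory.integral_fintype_prod_volume_eq_pow (ι := Fin k) g]
  rw [Fintype.card_fin]
  have hint : (∫ y : Y, g y) = p * Real.exp (c * (1 - p))
      + (1 - p) * Real.exp (-(c * p)) := indicator_integral_eq D A hA c
  rw [hint]
  have hb : p * Real.exp (c * (1 - p)) + (1 - p) * Real.exp (-(c * p))
      ≤ Real.exp (c ^ 2 / 8) := by
    apply bernoulli_mgf p c ENNReal.toReal_nonneg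
    simpa [hp] using ENNReal.toReal_mono ENNReal.one_ne_top (prob_le_one (μ := D) (s := A))
  have hbase : (0:ℝ) ≤ p * Real.exp (c * (1 - p)) + (1 - p) * Real.exp (-(c * p)) := by
    have hp0 : (0:ℝ) ≤ p := ENNReal.toReal_nonneg
    have hp1 : p ≤ 1 := by
      simpa [hp] using ENNReal.toReal_mono ENNReal.one_ne_top (prob_le_one (μ := D) (s := A))
    have := Real.exp_pos (c * (1 - p))
    have := Real.exp_pos (-(c * p))
    nlinarith
  calc (p * Real.exp (c * (1 - p)) + (1 - p) * Real.exp (-(c * p))) ^ k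
      ≤ (Real.exp (c ^ 2 / 8)) ^ k := pow_le_pow_left₀ hbase hb k
    _ = Real.exp (k * (c ^ 2 / 8)) := (Real.exp_nat_mul _ k).symm
    _ = Real.exp (lam ^ 2 / (8 * k)) := by
        congr 1
        rw [hc]
        field_simp

lemma key_onesided
    {Ω : Type*} [MeasurableSpace Ω] (P : Measure Ω) [IsProbabilityMeasure P]
    {Y : Type*} [MeasurableSpace Y] (D : Measure Y) [IsProbabilityMeasure D]
    (k : ℕ) (hk : 1 ≤ k)
    (x : Fin k → Ω → Y) (hx : ∀ i, Measurable (x i))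
    (hiid : P.map (fun ω i => x i ω) = Measure.pi fun _ : Fin k => D)
    (e : Set Ω) (he : MeasurableSet e)
    (δ : ℝ) (hδ0 : 0 < δ) (hδ1 : δ < 1) (hPe : P e = ENNReal.ofReal δ)
    (B : Set Y) (hB : MeasurableSet B) :
    ∫ ω, ((∑ i, B.indicator (1 : Y → ℝ) (x i ω)) / k - (D B).toReal)
        * e.indicator (1 : Ω → ℝ) ω ∂P
      ≤ δ * Real.sqrt (Real.log (1 / δ) / (2 * k)) := by
  have hk0 : (0:ℝ) < k := by exact_mod_cast hk
  set p : ℝ := (D B).toReal with hp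
  set S : Ω → ℝ := fun ω => (∑ i, B.indicator (1 : Y → ℝ) (x i ω)) / k with hS
  have hindm : Measurable (B.indicator (1 : Y → ℝ)) := measurable_const.indicator hB
  have hSm : Measurable S := by
    apply Measurable.div_const
    exact Finset.measurable_sum Finset.univ fun i _ => hindm.comp (hx i)
  have hind01 : ∀ y, 0 ≤ B.indicator (1 : Y → ℝ) y ∧ B.indicator (1 : Y → ℝ) y ≤ 1 := by
    intro y; by_cases h : y ∈ B <;> simp [h]
  have hS01 : ∀ ω, 0 ≤ S ω ∧ S ω ≤ 1 := by
    intro ω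
    constructor
    · apply div_nonneg _ hk0.le
      exact Finset.sum_nonneg fun i _ => (hind01 _).1
    · rw [div_le_one hk0]
      calc ∑ i, B.indicator (1 : Y → ℝ) (x i ω) ≤ ∑ _i : Fin k, (1:ℝ) :=
            Finset.sum_le_sum fun i _ => (hind01 _).2
        _ = k := by simp
  have hp0 : 0 ≤ p := ENNReal.toReal_nonneg
  have hp1 : p ≤ 1 := by
    simpa [hp] using ENNReal.toReal_mono ENNReal.one_ne_top (prob_le_one (μ := D) (s := B))
  have habs : ∀ ω, |S ω - p| ≤ 1 := fun ω =>
    abs_le.2 ⟨by linarith [(hS01 ω).1], by linarith [(hS01 ω).2]⟩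
  set L : ℝ := Real.log (1 / δ) with hLdef
  have hL : 0 < L := Real.log_pos (one_lt_one_div hδ0 hδ1)
  set lam : ℝ := Real.sqrt (8 * k * L) with hlamdef
  have hlam : 0 < lam := Real.sqrt_pos.2 (by positivity)
  have hlamsq : lam ^ 2 = 8 * k * L := Real.sq_sqrt (by positivity)
  set Z : Ω → ℝ := fun ω => Real.exp (lam * (S ω - p)) with hZ
  have hZm : Measurable Z := ((hSm.sub measurable_const).const_mul lam).exp
  have hZb : ∀ ω, Z ω ≤ Real.exp lam := by
    intro ω
    apply Real.exp_le_exp.2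
    calc lam * (S ω - p) ≤ lam * 1 :=
          mul_le_mul_of_nonneg_left (by linarith [(habs ω), abs_le.1 (habs ω)]) hlam.le
      _ = lam := mul_one lam
  have hZlb : ∀ ω, Real.exp (-lam) ≤ Z ω := by
    intro ω
    apply Real.exp_le_exp.2
    have : -1 ≤ S ω - p := by linarith [abs_le.1 (habs ω)]
    calc -lam = lam * (-1) := by ring
      _ ≤ lam * (S ω - p) := mul_le_mul_of_nonneg_left this hlam.le
  have hZint : Integrable Z P := by
    apply Integrable.mono' (integrable_const (Real.exp lam)) hZm.aestronglyMeasurable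
    filter_upwards with ω
    rw [Real.norm_eq_abs, abs_of_pos (Real.exp_pos _)]
    exact hZb ω
  set M : ℝ := ∫ ω, Z ω ∂P with hM
  have hMle : M ≤ Real.exp (lam ^ 2 / (8 * k)) := mgf_bound P D k hk x hx hiid B hB lam
  have hMpos : 0 < M := by
    have h1 : ∫ (_ : Ω), Real.exp (-lam) ∂P ≤ M :=
      integral_mono (integrable_const _) hZint hZlb
    have h2 : ∫ (_ : Ω), Real.exp (-lam) ∂P = Real.exp (-lam) := by simp
    calc (0:ℝ) < Real.exp (-lam) := Real.exp_pos _
      _ ≤ M := h2 ▸ h1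
  set a : ℝ := Real.log M + L with ha
  have hea : Real.exp a = M * (1 / δ) := by
    rw [ha, Real.exp_add, Real.exp_log hMpos, hLdef, Real.exp_log (by positivity)]
  have hloga : Real.log M ≤ L := by
    rw [Real.log_le_iff_le_exp hMpos]
    refine hMle.trans_eq ?_
    congr 1
    rw [hlamsq]
    field_simp
  have hpt : ∀ ω, lam * ((S ω - p) * e.indicator (1 : Ω → ℝ) ω)
      ≤ Real.exp (lam * (S ω - p) - a) + (a - 1) * e.indicator (1 : Ω → ℝ) ω := by
    intro ω
    by_cases hω : ω ∈ e
    · simp only [Set.indicator_of_mem hω, Pi.one_apply, mul_one]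
      have h := Real.add_one_le_exp (lam * (S ω - p) - a)
      linarith
    · simp only [Set.indicator_of_notMem hω, mul_zero, add_zero]
      exact (Real.exp_pos _).le
  have hind_int : Integrable (e.indicator (1 : Ω → ℝ)) P := (integrable_const 1).indicator he
  have hI1 : Integrable (fun ω => (S ω - p) * e.indicator (1 : Ω → ℝ) ω) P :=
    hind_int.bdd_mul (hSm.sub measurable_const).aestronglyMeasurable
      (Filter.Eventually.of_forall fun ω => by rw [Real.norm_eq_abs]; exact habs ω)
  have hI2 : Integrable (fun ω => Real.exp (lam * (S ω - p) - a)) P := by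
    apply Integrable.mono' (integrable_const (Real.exp (lam - a)))
      (((hSm.sub measurable_const).const_mul lam).sub measurable_const).exp.aestronglyMeasurable
    filter_upwards with ω
    rw [Real.norm_eq_abs, abs_of_pos (Real.exp_pos _)]
    apply Real.exp_le_exp.2
    have : lam * (S ω - p) ≤ lam := by
      calc lam * (S ω - p) ≤ lam * 1 :=
            mul_le_mul_of_nonneg_left (by linarith [abs_le.1 (habs ω)]) hlam.le
        _ = lam := mul_one lam
    show lam * (S ω - p) - a ≤ lam - a
    linarith
  have hI3 : Integrable (fun ω => (a - 1) * e.indicator (1 : Ω → ℝ) ω) P :=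
    hind_int.const_mul (a - 1)
  have hmono := integral_mono (hI1.const_mul lam) (hI2.add hI3) hpt
  set I : ℝ := ∫ ω, (S ω - p) * e.indicator (1 : Ω → ℝ) ω ∂P with hI
  have hδtoReal : (P e).toReal = δ := by rw [hPe, ENNReal.toReal_ofReal hδ0.le]
  have hlhs : ∫ ω, lam * ((S ω - p) * e.indicator (1 : Ω → ℝ) ω) ∂P = lam * I := by
    rw [integral_const_mul]
  have hrhs : ∫ ω, (Real.exp (lam * (S ω - p) - a) + (a - 1) * e.indicator (1 : Ω → ℝ) ω) ∂P
      = δ + (a - 1) * δ := by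
    rw [integral_add hI2 hI3]
    congr 1
    · have : ∀ ω, Real.exp (lam * (S ω - p) - a) = Z ω / Real.exp a := by
        intro ω; rw [Real.exp_sub]
      simp_rw [this]
      rw [integral_div, ← hM, hea]
      field_simp
    · rw [integral_const_mul, integral_indicator_one he, Measure.real, hδtoReal]
  simp only [Pi.add_apply] at hmono
  rw [hlhs, hrhs] at hmono
  have hkey : lam * I ≤ a * δ := by linarith
  have ha2L : a ≤ 2 * L := by linarith
  set t : ℝ := Real.sqrt (L / (2 * k)) with ht
  have hlt : lam * t = 2 * L := by
    rw [hlamdef, ht, ← Real.sqrt_mul (by positivity)]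
    rw [show 8 * (k:ℝ) * L * (L / (2 * k)) = (2 * L) ^ 2 by field_simp; ring]
    exact Real.sqrt_sq (by positivity)
  have : lam * I ≤ lam * (δ * t) := by
    calc lam * I ≤ a * δ := hkey
      _ ≤ (2 * L) * δ := mul_le_mul_of_nonneg_right ha2L hδ0.le
      _ = lam * (δ * t) := by rw [← hlt]; ring
  exact le_of_mul_le_mul_left this hlam

/-- Let `x₁, …, x_k` be i.i.d. with law `D` on a probability space
`(Ω, P)`, and let `e` be an event with `P(e) = δ ∈ (0,1]`.  Let `D_e` be the law of a
uniformly random element among `x₁, …, x_k`, conditioned on `e`, i.e.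
`D_e = (1/k) • ∑ᵢ (P[·|e]).map xᵢ`.  Then `d_TV(D, D_e) ≤ √(ln(1/δ)/(2k))`, i.e. for
every measurable set `A`, `|D(A) − D_e(A)| ≤ √(ln(1/δ)/(2k))`. -/
theorem tv_of_conditioned_empirical
    {Ω : Type*} [MeasurableSpace Ω] (P : Measure Ω) [IsProbabilityMeasure P]
    {Y : Type*} [MeasurableSpace Y] (D : Measure Y) [IsProbabilityMeasure D]
    (k : ℕ) (hk : 1 ≤ k)
    (x : Fin k → Ω → Y) (hx : ∀ i, Measurable (x i))
    (hiid : P.map (fun ω i => x i ω) = Measure.pi fun _ : Fin k => D)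
    (e : Set Ω) (he : MeasurableSet e)
    (δ : ℝ) (hδ0 : 0 < δ) (hδ1 : δ ≤ 1) (hPe : P e = ENNReal.ofReal δ)
    (A : Set Y) (hA : MeasurableSet A) :
    |(D A).toReal -
        (((k : ℝ≥0∞)⁻¹ • ∑ i : Fin k, (ProbabilityTheory.cond P e).map (x i)) A).toReal|
      ≤ Real.sqrt (Real.log (1 / δ) / (2 * k)) := by
  have hk0 : (0:ℝ) < k := by exact_mod_cast hk
  have hkne : (k : ℝ≥0∞) ≠ 0 := Nat.cast_ne_zero.2 (by omega)
  have hvec : Measurable (fun ω i => x i ω) := measurable_pi_lambda _ hx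
  rcases eq_or_lt_of_le hδ1 with hδeq | hδlt
  -- Case δ = 1 : conditioning is trivial
  · subst hδeq
    have h1 : P e = 1 := by rw [hPe]; simp
    have hec : P eᶜ = 0 := by
      rw [measure_compl he (measure_ne_top _ _), measure_univ, h1, tsub_self]
    have hcond : ProbabilityTheory.cond P e = P := by
      ext s hs
      rw [ProbabilityTheory.cond_apply he, h1, inv_one, one_mul, Set.inter_comm,
        measure_inter_conull hec]
    have hmarg : ∀ i, P.map (x i) = D := by
      intro i
      have h2 : P.map (x i) = (P.map (fun ω j => x j ω)).map (fun v => v i) := by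
        rw [Measure.map_map (measurable_pi_apply i) hvec]
        rfl
      rw [h2, hiid]
      ext s hs
      rw [Measure.map_apply (measurable_pi_apply i) hs]
      rw [show (fun v : Fin k → Y => v i) ⁻¹' s = Function.eval i ⁻¹' s from rfl,
        Set.eval_preimage, Measure.pi_pi]
      have hterm : ∀ j, D (Function.update (fun _ => (Set.univ : Set Y)) i s j)
          = Function.update (fun _ : Fin k => (1 : ℝ≥0∞)) i (D s) j := fun j =>
        Function.apply_update (fun _ t => D t) (fun _ => (Set.univ : Set Y)) i s j ▸ by
          rcases eq_or_ne j i with h | h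
          · subst h; simp
          · simp [Function.update_of_ne h]
      simp_rw [hterm]
      rw [Finset.prod_update_of_mem (Finset.mem_univ i)]
      simp
    have hDe : ((k : ℝ≥0∞)⁻¹ • ∑ i : Fin k, (ProbabilityTheory.cond P e).map (x i)) A = D A := by
      rw [hcond]
      rw [Measure.smul_apply, Measure.finset_sum_apply]
      simp_rw [hmarg]
      rw [Finset.sum_const, Finset.card_univ, Fintype.card_fin, smul_eq_mul, nsmul_eq_mul,
        ← mul_assoc, ENNReal.inv_mul_cancel hkne (ENNReal.natCast_ne_top k), one_mul]
    rw [hDe, sub_self, abs_zero]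
    exact Real.sqrt_nonneg _
  -- Case δ < 1
  · set p : ℝ := (D A).toReal with hp
    set t : ℝ := Real.sqrt (Real.log (1 / δ) / (2 * k)) with ht
    have hδne : P e ≠ 0 := by rw [hPe]; simpa using hδ0
    haveI : IsProbabilityMeasure (ProbabilityTheory.cond P e) :=
      ProbabilityTheory.cond_isProbabilityMeasure hδne
    set r : Fin k → ℝ := fun i => (P (e ∩ x i ⁻¹' A)).toReal with hr
    set T : ℝ := (∑ i, r i) / k with hT
    -- computing the conditioned empirical measure
    have hDe : (((k : ℝ≥0∞)⁻¹ • ∑ i : Fin k, (ProbabilityTheory.cond P e).map (x i)) A).toReal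
        = δ⁻¹ * T := by
      rw [Measure.smul_apply, Measure.finset_sum_apply, smul_eq_mul, ENNReal.toReal_mul,
        ENNReal.toReal_inv, ENNReal.toReal_natCast]
      rw [ENNReal.toReal_sum (fun i _ => measure_ne_top _ _)]
      have hterm : ∀ i : Fin k, ((ProbabilityTheory.cond P e).map (x i) A).toReal
          = δ⁻¹ * r i := by
        intro i
        rw [Measure.map_apply (hx i) hA, ProbabilityTheory.cond_apply he, ENNReal.toReal_mul,
          ENNReal.toReal_inv, hPe, ENNReal.toReal_ofReal hδ0.le, hr]
      simp_rw [hterm]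
      rw [← Finset.mul_sum, hT]
      ring
    -- the integral identity
    set I : ℝ := ∫ ω, ((∑ i, A.indicator (1 : Y → ℝ) (x i ω)) / k - p)
        * e.indicator (1 : Ω → ℝ) ω ∂P with hI
    have hIeq : I = T - p * δ := by
      have hpt : ∀ ω, ((∑ i, A.indicator (1 : Y → ℝ) (x i ω)) / k - p)
            * e.indicator (1 : Ω → ℝ) ω
          = (∑ i, (e ∩ x i ⁻¹' A).indicator (1 : Ω → ℝ) ω) / k
            - p * e.indicator (1 : Ω → ℝ) ω := by
        intro ω
        by_cases hω : ω ∈ e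
        · have : ∀ i : Fin k, (e ∩ x i ⁻¹' A).indicator (1 : Ω → ℝ) ω
              = A.indicator (1 : Y → ℝ) (x i ω) := by
            intro i
            by_cases h : x i ω ∈ A <;>
              simp [Set.indicator_apply, hω, h, Set.mem_inter_iff, Set.mem_preimage]
          simp_rw [this]
          simp [Set.indicator_of_mem hω]
        · have : ∀ i : Fin k, (e ∩ x i ⁻¹' A).indicator (1 : Ω → ℝ) ω = 0 := by
            intro i
            simp [Set.indicator_apply, hω]
          simp_rw [this]
          simp [Set.indicator_of_notMem hω]
      rw [hI]
      simp_rw [hpt]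
      have hint1 : Integrable (fun ω => (∑ i, (e ∩ x i ⁻¹' A).indicator (1 : Ω → ℝ) ω) / k) P :=
        (integrable_finset_sum Finset.univ fun i _ =>
          ((integrable_const 1).indicator (he.inter (hx i hA)) :
            Integrable ((e ∩ x i ⁻¹' A).indicator (1 : Ω → ℝ)) P)).div_const (k:ℝ)
      have hint2 : Integrable (fun ω => p * e.indicator (1 : Ω → ℝ) ω) P :=
        ((integrable_const 1).indicator he).const_mul p
      have hsum := integral_finset_sum (μ := P) Finset.univ
        (f := fun (i : Fin k) (ω : Ω) => (e ∩ x i ⁻¹' A).indicator (1 : Ω → ℝ) ω)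
        (fun i _ => (integrable_const 1).indicator (he.inter (hx i hA)))
      rw [integral_sub hint1 hint2, integral_div, hsum, integral_const_mul,
        integral_indicator_one he, Measure.real, hPe, ENNReal.toReal_ofReal hδ0.le]
      congr 1
      rw [hT]
      congr 1
      exact Finset.sum_congr rfl fun i _ => integral_indicator_one (he.inter (hx i hA))
    -- bounds
    have hup : I ≤ δ * t := key_onesided P D k hk x hx hiid e he δ hδ0 hδlt hPe A hA
    have hlow : -I ≤ δ * t := by
      have hkey := key_onesided P D k hk x hx hiid e he δ hδ0 hδlt hPe Aᶜ hA.compl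
      have hcompl : (D Aᶜ).toReal = 1 - p := by
        rw [prob_compl_eq_one_sub hA, ENNReal.toReal_sub_of_le prob_le_one ENNReal.one_ne_top]
        simp [hp]
      have hneg : ∀ ω, ((∑ i, Aᶜ.indicator (1 : Y → ℝ) (x i ω)) / k - (D Aᶜ).toReal)
            * e.indicator (1 : Ω → ℝ) ω
          = -(((∑ i, A.indicator (1 : Y → ℝ) (x i ω)) / k - p) * e.indicator (1 : Ω → ℝ) ω) := by
        intro ω
        have h1 : ∀ y, Aᶜ.indicator (1 : Y → ℝ) y = 1 - A.indicator (1 : Y → ℝ) y := by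
          intro y; by_cases h : y ∈ A <;> simp [h]
        simp_rw [h1]
        rw [Finset.sum_sub_distrib, Finset.sum_const, Finset.card_univ, Fintype.card_fin,
          hcompl, nsmul_eq_mul, mul_one]
        have : ((k:ℝ) - ∑ i, A.indicator (1 : Y → ℝ) (x i ω)) / k - (1 - p)
            = -((∑ i, A.indicator (1 : Y → ℝ) (x i ω)) / k - p) := by
          field_simp
          ring
        rw [this, neg_mul]
      rw [show ∫ ω, ((∑ i, Aᶜ.indicator (1 : Y → ℝ) (x i ω)) / k - (D Aᶜ).toReal)
            * e.indicator (1 : Ω → ℝ) ω ∂P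
          = ∫ ω, -(((∑ i, A.indicator (1 : Y → ℝ) (x i ω)) / k - p)
            * e.indicator (1 : Ω → ℝ) ω) ∂P from integral_congr_ae (Filter.Eventually.of_forall hneg),
        integral_neg] at hkey
      exact hkey
    have habsI : |I| ≤ δ * t := abs_le.2 ⟨by linarith, hup⟩
    -- conclusion
    rw [hDe]
    have : p - δ⁻¹ * T = -(δ⁻¹ * I) := by
      rw [hIeq]
      field_simp
      ring
    rw [this, abs_neg, abs_mul, abs_of_nonneg (by positivity : (0:ℝ) ≤ δ⁻¹)]
    calc δ⁻¹ * |I| ≤ δ⁻¹ * (δ * t) := by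
          apply mul_le_mul_of_nonneg_left habsI (by positivity)
      _ = t := by field_simp
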